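/- (G-fractional hidden convexity) Let G be an N-function satisfying (H4), and let 1 < q ≤ p⁻. For every pair of nonnegative functions u₀, u₁ : ℝ^N → [0,∞), define σ_t(x) = [(1−t) u₀(x)^q + t u₁(x)^q]^{1/q} for t ∈ [0,1] and x ∈ ℝ^N. Then for all t ∈ [0,1] and all x, y ∈ ℝ^N: G(|σ_t(x) − σ_t(y)|) ≤ (1−t) G(|u₀(x) − u₀(y)|) + t G(|u₁(x) − u₁(y)|). -/

import Mathlib

open MeasureTheory Filter Set

noncomputable section

abbrev Euc (N : ℕ) := EuclideanSpace ℝ (Fin N)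

/-- An N-function: continuous, convex on `[0,∞)`, vanishing exactly at `0`,
with `G t / t → 0` as `t → 0⁺` and `G t / t → ∞` as `t → ∞`. -/
def IsNFunction (G : ℝ → ℝ) : Prop :=
  ContinuousOn G (Set.Ici 0) ∧ ConvexOn ℝ (Set.Ici 0) G ∧
  (∀ t : ℝ, 0 ≤ t → (G t = 0 ↔ t = 0)) ∧
  Tendsto (fun t => G t / t) (nhdsWithin 0 (Set.Ioi 0)) (nhds 0) ∧
  Tendsto (fun t => G t / t) atTop atTop

/-- Two-point weighted Minkowski inequality. -/
lemma aux_minkowski2 {q b d e f t : ℝ} (hq : 1 ≤ q) (hb : 0 ≤ b) (hd : 0 ≤ d)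
    (he : 0 ≤ e) (hf : 0 ≤ f) (ht0 : 0 ≤ t) (ht1 : t ≤ 1) :
    ((1 - t) * (b + e) ^ q + t * (d + f) ^ q) ^ (1 / q)
      ≤ ((1 - t) * b ^ q + t * d ^ q) ^ (1 / q)
        + ((1 - t) * e ^ q + t * f ^ q) ^ (1 / q) := by
  have hq0 : q ≠ 0 := by linarith
  have hs : (0:ℝ) ≤ 1 - t := by linarith
  have key : ∀ s z : ℝ, 0 ≤ s → 0 ≤ z → (s ^ (1 / q) * z) ^ q = s * z ^ q := by
    intro s z hs hz
    rw [Real.mul_rpow (Real.rpow_nonneg hs _) hz, one_div, Real.rpow_inv_rpow hs hq0]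
  have H := Real.Lp_add_le_of_nonneg (s := (Finset.univ : Finset (Fin 2)))
    (f := ![(1 - t) ^ (1 / q) * b, t ^ (1 / q) * d])
    (g := ![(1 - t) ^ (1 / q) * e, t ^ (1 / q) * f]) hq
    (by
      intro i _
      fin_cases i <;> simp <;> positivity)
    (by
      intro i _
      fin_cases i <;> simp <;> positivity)
  simp only [Fin.sum_univ_two, Matrix.cons_val_zero, Matrix.cons_val_one, Matrix.head_cons] at H
  have e1 : (1 - t) ^ (1 / q) * b + (1 - t) ^ (1 / q) * e = (1 - t) ^ (1 / q) * (b + e) := by ring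
  have e2 : t ^ (1 / q) * d + t ^ (1 / q) * f = t ^ (1 / q) * (d + f) := by ring
  rw [e1, e2, key _ _ hs (by positivity), key _ _ ht0 (by positivity),
    key _ _ hs hb, key _ _ ht0 hd, key _ _ hs he, key _ _ ht0 hf] at H
  exact H

/-- G-fractional hidden convexity: if `G` is an N-function satisfying (H4)
(`1 < p⁻ − 1 ≤ t g'(t)/g(t) ≤ p⁺ − 1` for all `t > 0`, `g = G'` of class `C¹` on `(0,∞)`)
and `1 < q ≤ p⁻`, then for nonnegative `u₀, u₁ : ℝ^N → [0,∞)`, the curve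
`σ_t(x) = ((1−t) u₀(x)^q + t u₁(x)^q)^{1/q}` satisfies
`G(|σ_t(x) − σ_t(y)|) ≤ (1−t) G(|u₀(x) − u₀(y)|) + t G(|u₁(x) − u₁(y)|)`. -/
theorem G_fractional_hidden_convexity
    {N : ℕ}
    (G g g' : ℝ → ℝ) (pm pp : ℝ) (hG : IsNFunction G)
    (hGg : ∀ t : ℝ, 0 < t → HasDerivAt G (g t) t)
    (hgg' : ∀ t : ℝ, 0 < t → HasDerivAt g (g' t) t)
    (hg'cont : ContinuousOn g' (Set.Ioi 0))
    (hpm : 1 < pm - 1)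
    (hH4 : ∀ t : ℝ, 0 < t → pm - 1 ≤ t * g' t / g t ∧ t * g' t / g t ≤ pp - 1)
    (q : ℝ) (hq1 : 1 < q) (hqpm : q ≤ pm)
    (u₀ u₁ : Euc N → ℝ) (hu₀ : ∀ x, 0 ≤ u₀ x) (hu₁ : ∀ x, 0 ≤ u₁ x)
    (t : ℝ) (ht : t ∈ Set.Icc (0:ℝ) 1) (x y : Euc N) :
    G |((1 - t) * u₀ x ^ q + t * u₁ x ^ q) ^ (1 / q)
        - ((1 - t) * u₀ y ^ q + t * u₁ y ^ q) ^ (1 / q)|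
      ≤ (1 - t) * G |u₀ x - u₀ y| + t * G |u₁ x - u₁ y| := by
  obtain ⟨hGc, hGconv, hGzero, hGlim0, hGlimtop⟩ := hG
  have hq0 : (0:ℝ) < q := by linarith
  have hqne : q ≠ 0 := hq0.ne'
  have hG0 : G 0 = 0 := (hGzero 0 le_rfl).mpr rfl
  -- G s / s ≥ 0 for s > 0, via slope monotonicity and the limit at 0⁺
  have hslope_nonneg : ∀ s : ℝ, 0 < s → 0 ≤ G s / s := by
    intro s hs
    have hmono := hGconv.slope_mono (x := 0) (mem_Ici.mpr le_rfl)
    have hev : ∀ᶠ z in nhdsWithin 0 (Set.Ioi 0), G z / z ≤ G s / s := by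
      filter_upwards [eventually_mem_nhdsWithin, Filter.Tendsto.eventually_lt_const hs
        (tendsto_id.mono_left nhdsWithin_le_nhds)] with z hz hzs
      have h1 : z ∈ Set.Ici (0:ℝ) \ {0} := ⟨mem_Ici.mpr (le_of_lt hz), by simpa using (ne_of_gt hz)⟩
      have h2 : s ∈ Set.Ici (0:ℝ) \ {0} := ⟨le_of_lt hs, by simpa using (ne_of_gt hs)⟩
      have := hmono h1 h2 (le_of_lt hzs)
      simpa [slope_def_field, hG0] using this
    exact le_of_tendsto hGlim0 hev
  -- positivity of G on (0,∞)
  have hGpos : ∀ s : ℝ, 0 < s → 0 < G s := by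
    intro s hs
    have h1 : 0 ≤ G s := by
      have h := mul_nonneg (hslope_nonneg s hs) hs.le
      rwa [div_mul_cancel₀ _ hs.ne'] at h
    rcases h1.lt_or_eq with h | h
    · exact h
    · exact absurd ((hGzero s hs.le).mp h.symm) hs.ne'
  -- g s ≥ G s / s > 0 on (0,∞)
  have hgpos : ∀ s : ℝ, 0 < s → 0 < g s := by
    intro s hs
    have hsl := hGconv.slope_le_of_hasDerivAt (mem_Ici.mpr le_rfl)
      (mem_Ici.mpr hs.le) hs (hGg s hs)
    have : G s / s ≤ g s := by simpa [slope_def_field, hG0] using hsl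
    exact lt_of_lt_of_le (div_pos (hGpos s hs) hs) this
  -- key differential inequality from (H4): s * g' s ≥ (q - 1) * g s
  have hkey : ∀ s : ℝ, 0 < s → (q - 1) * g s ≤ s * g' s := by
    intro s hs
    have h1 := (hH4 s hs).1
    have hg := hgpos s hs
    have h2 : (pm - 1) * g s ≤ s * g' s := (le_div_iff₀ hg).mp h1
    nlinarith
  -- G is monotone on [0,∞)
  have hGmono : MonotoneOn G (Set.Ici 0) := by
    apply monotoneOn_of_deriv_nonneg (convex_Ici 0) hGc
    · intro s hs
      rw [interior_Ici] at hs
      exact ((hGg s hs).differentiableAt).differentiableWithinAt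
    · intro s hs
      rw [interior_Ici] at hs
      rw [(hGg s hs).deriv]
      exact (hgpos s hs).le
  -- h s = g s * s ^ (1 - q) is monotone on (0,∞)
  set h : ℝ → ℝ := fun s => g s * s ^ (1 - q) with hh
  have hderiv : ∀ s : ℝ, 0 < s →
      HasDerivAt h (g' s * s ^ (1 - q) + g s * ((1 - q) * s ^ (1 - q - 1))) s := by
    intro s hs
    exact (hgg' s hs).mul (Real.hasDerivAt_rpow_const (Or.inl hs.ne'))
  have hmonoh : MonotoneOn h (Set.Ioi 0) := by
    apply monotoneOn_of_deriv_nonneg (convex_Ioi 0)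
    · intro s hs
      exact ((hderiv s hs).differentiableAt).continuousAt.continuousWithinAt
    · intro s hs
      rw [interior_Ioi] at hs
      exact ((hderiv s hs).differentiableAt).differentiableWithinAt
    · intro s hs
      rw [interior_Ioi] at hs
      rw [(hderiv s hs).deriv]
      have e1 : s ^ (1 - q) = s * s ^ (1 - q - 1) := by
        rw [← Real.rpow_one_add' hs.le (by ring_nf; linarith : (1:ℝ) + (1 - q - 1) ≠ 0)]
        ring_nf
      have hpow : (0:ℝ) < s ^ (1 - q - 1) := Real.rpow_pos_of_pos hs _
      have := hkey s hs
      calc (0:ℝ) ≤ (s * g' s - (q - 1) * g s) * s ^ (1 - q - 1) := by nlinarith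
        _ = g' s * s ^ (1 - q) + g s * ((1 - q) * s ^ (1 - q - 1)) := by rw [e1]; ring
  -- φ u = G (u ^ (1/q)) is convex on [0,∞)
  set φ : ℝ → ℝ := fun u => G (u ^ (1 / q)) with hφ
  have hφderiv : ∀ u : ℝ, 0 < u →
      HasDerivAt φ (g (u ^ (1 / q)) * (1 / q * u ^ (1 / q - 1))) u := by
    intro u hu
    have h1 : HasDerivAt (fun z : ℝ => z ^ (1 / q)) (1 / q * u ^ (1 / q - 1)) u :=
      Real.hasDerivAt_rpow_const (Or.inl hu.ne')
    have h2 := (hGg (u ^ (1 / q)) (Real.rpow_pos_of_pos hu _)).comp u h1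
    simpa [Function.comp_def, hφ, one_div] using h2
  have hφconv : ConvexOn ℝ (Set.Ici 0) φ := by
    apply MonotoneOn.convexOn_of_deriv (convex_Ici 0)
    · -- continuity
      apply hGc.comp
      · intro u _
        exact (Real.continuousAt_rpow_const u (1/q)
          (Or.inr (by positivity))).continuousWithinAt
      · intro u hu
        exact mem_Ici.mpr (Real.rpow_nonneg (mem_Ici.mp hu) _)
    · intro u hu
      rw [interior_Ici] at hu
      exact ((hφderiv u hu).differentiableAt).differentiableWithinAt
    · rw [interior_Ici]
      intro u hu v hv huv
      rw [(hφderiv u hu).deriv, (hφderiv v hv).deriv]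
      have hrw : ∀ w : ℝ, 0 < w →
          g (w ^ (1 / q)) * (1 / q * w ^ (1 / q - 1)) = 1 / q * h (w ^ (1 / q)) := by
        intro w hw
        have hexp : 1 / q * (1 - q) = 1 / q - 1 := by field_simp
        have hpw : (w ^ (1 / q)) ^ (1 - q) = w ^ (1 / q - 1) := by
          rw [← Real.rpow_mul hw.le, hexp]
        simp only [hh]
        rw [hpw]
        ring
      rw [hrw u hu, hrw v hv]
      have hle : h (u ^ (1 / q)) ≤ h (v ^ (1 / q)) := by
        apply hmonoh (mem_Ioi.mpr (Real.rpow_pos_of_pos hu _))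
          (mem_Ioi.mpr (Real.rpow_pos_of_pos hv _))
          (Real.rpow_le_rpow hu.le huv (by positivity))
      have : (0:ℝ) ≤ 1 / q := by positivity
      exact mul_le_mul_of_nonneg_left hle this
  -- notation
  obtain ⟨ht0, ht1⟩ := ht
  have hs1t : (0:ℝ) ≤ 1 - t := by linarith
  set a := u₀ x with ha'
  set b := u₀ y with hb'
  set c := u₁ x with hc'
  set d := u₁ y with hd'
  have ha := hu₀ x
  have hb := hu₀ y
  have hc := hu₁ x
  have hd := hu₁ y
  set X := (1 - t) * |a - b| ^ q + t * |c - d| ^ q with hX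
  have hXnn : 0 ≤ X := by positivity
  set M := X ^ (1 / q) with hM
  have hMnn : 0 ≤ M := Real.rpow_nonneg hXnn _
  -- reverse-triangle / Minkowski claim
  have claim : |((1 - t) * a ^ q + t * c ^ q) ^ (1 / q)
      - ((1 - t) * b ^ q + t * d ^ q) ^ (1 / q)| ≤ M := by
    rw [abs_sub_le_iff]
    constructor
    · have h1 : a ≤ b + |a - b| := by linarith [le_abs_self (a - b)]
      have h2 : c ≤ d + |c - d| := by linarith [le_abs_self (c - d)]
      have hA : (1 - t) * a ^ q + t * c ^ q
          ≤ (1 - t) * (b + |a - b|) ^ q + t * (d + |c - d|) ^ q := by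
        have e1 : a ^ q ≤ (b + |a - b|) ^ q := Real.rpow_le_rpow ha h1 hq0.le
        have e2 : c ^ q ≤ (d + |c - d|) ^ q := Real.rpow_le_rpow hc h2 hq0.le
        have := mul_le_mul_of_nonneg_left e1 hs1t
        have := mul_le_mul_of_nonneg_left e2 ht0
        linarith
      have hfin : ((1 - t) * a ^ q + t * c ^ q) ^ (1 / q)
          ≤ ((1 - t) * b ^ q + t * d ^ q) ^ (1 / q) + M :=
        calc ((1 - t) * a ^ q + t * c ^ q) ^ (1 / q)
          ≤ ((1 - t) * (b + |a - b|) ^ q + t * (d + |c - d|) ^ q) ^ (1 / q) :=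
            Real.rpow_le_rpow (by positivity) hA (by positivity)
        _ ≤ ((1 - t) * b ^ q + t * d ^ q) ^ (1 / q) + M :=
            aux_minkowski2 hq1.le hb hd (abs_nonneg _) (abs_nonneg _) ht0 ht1
      linarith
    · have h1 : b ≤ a + |a - b| := by linarith [neg_abs_le (a - b)]
      have h2 : d ≤ c + |c - d| := by linarith [neg_abs_le (c - d)]
      have hA : (1 - t) * b ^ q + t * d ^ q
          ≤ (1 - t) * (a + |a - b|) ^ q + t * (c + |c - d|) ^ q := by
        have e1 : b ^ q ≤ (a + |a - b|) ^ q := Real.rpow_le_rpow hb h1 hq0.le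
        have e2 : d ^ q ≤ (c + |c - d|) ^ q := Real.rpow_le_rpow hd h2 hq0.le
        have := mul_le_mul_of_nonneg_left e1 hs1t
        have := mul_le_mul_of_nonneg_left e2 ht0
        linarith
      have hfin : ((1 - t) * b ^ q + t * d ^ q) ^ (1 / q)
          ≤ ((1 - t) * a ^ q + t * c ^ q) ^ (1 / q) + M :=
        calc ((1 - t) * b ^ q + t * d ^ q) ^ (1 / q)
          ≤ ((1 - t) * (a + |a - b|) ^ q + t * (c + |c - d|) ^ q) ^ (1 / q) :=
            Real.rpow_le_rpow (by positivity) hA (by positivity)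
        _ ≤ ((1 - t) * a ^ q + t * c ^ q) ^ (1 / q) + M :=
            aux_minkowski2 hq1.le ha hc (abs_nonneg _) (abs_nonneg _) ht0 ht1
      linarith
  -- main chain
  have step1 : G |((1 - t) * a ^ q + t * c ^ q) ^ (1 / q)
      - ((1 - t) * b ^ q + t * d ^ q) ^ (1 / q)| ≤ G M :=
    hGmono (mem_Ici.mpr (abs_nonneg _)) (mem_Ici.mpr hMnn) claim
  have step2 : G M = φ X := rfl
  have step3 : φ X ≤ (1 - t) * φ (|a - b| ^ q) + t * φ (|c - d| ^ q) := by
    have := hφconv.2 (mem_Ici.mpr (by positivity : (0:ℝ) ≤ |a - b| ^ q))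
      (mem_Ici.mpr (by positivity : (0:ℝ) ≤ |c - d| ^ q)) hs1t ht0 (by ring)
    simpa [smul_eq_mul] using this
  have e1 : φ (|a - b| ^ q) = G |a - b| := by
    simp only [hφ]
    rw [one_div, Real.rpow_rpow_inv (abs_nonneg _) hqne]
  have e2 : φ (|c - d| ^ q) = G |c - d| := by
    simp only [hφ]
    rw [one_div, Real.rpow_rpow_inv (abs_nonneg _) hqne]
  rw [e1, e2] at step3
  calc G |((1 - t) * a ^ q + t * c ^ q) ^ (1 / q)
      - ((1 - t) * b ^ q + t * d ^ q) ^ (1 / q)| ≤ G M := step1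
    _ = φ X := step2
    _ ≤ (1 - t) * G |a - b| + t * G |c - d| := step3
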